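/- Let b>0, M>0 and let g:ℂ→ℂ be an entire function whose restriction to [0,∞) is real-valued and satisfies |g(u)|≤M·e^{u²/4} for all u≥0. Then for every integer N≥1, as λ→+∞, ∫₀^∞ u^{b−1} g(u) e^{−λu²/2} du = (1/2)·Σ_{k=0}^{N−1} (g^{(k)}(0)/k!)·Γ((b+k)/2)·(λ/2)^{−(b+k)/2} + O(λ^{−(b+N)/2}). (This is the expansion at coalescence εx=1, equation (4.3) of the paper, of Watson's-lemma type.) -/

import Mathlib

open MeasureTheory Real Set Filter Topology Asymptotics

lemma coal_int (s : ℝ) (hs : -1 < s) (k : ℕ) {lam : ℝ} (hlam : 0 < lam) :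
    IntegrableOn (fun u : ℝ => u ^ s * u ^ k * Real.exp (-lam * u ^ 2 / 2)) (Ioi 0) := by
  have h := integrableOn_rpow_mul_exp_neg_mul_sq (show (0:ℝ) < lam / 2 by linarith)
    (s := s + k) (by have : (0:ℝ) ≤ k := Nat.cast_nonneg k; linarith)
  refine h.congr_fun (fun x hx => ?_) measurableSet_Ioi
  dsimp only
  rw [Real.rpow_add hx, Real.rpow_natCast]
  congr 1
  ring

lemma coal_moment (b : ℝ) (hb : 0 < b) (k : ℕ) {lam : ℝ} (hlam : 0 < lam) :
    ∫ u in Ioi (0:ℝ), u ^ (b - 1) * u ^ k * Real.exp (-lam * u ^ 2 / 2)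
      = (1/2) * Real.Gamma ((b + k) / 2) * (lam / 2) ^ (-(b + (k:ℝ)) / 2) := by
  have hq : (-1 : ℝ) < b - 1 + k := by have : (0:ℝ) ≤ k := Nat.cast_nonneg k; linarith
  have h := integral_rpow_mul_exp_neg_mul_rpow (p := 2) (q := b - 1 + k) (b := lam / 2)
    two_pos hq (by linarith)
  have he : ∀ x ∈ Ioi (0:ℝ), x ^ (b - 1 + (k:ℝ)) * Real.exp (-(lam / 2) * x ^ (2:ℝ))
      = x ^ (b - 1) * x ^ k * Real.exp (-lam * x ^ 2 / 2) := by
    intro x hx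
    rw [Real.rpow_add hx, Real.rpow_natCast, Real.rpow_two]
    congr 1
    ring
  rw [setIntegral_congr_fun measurableSet_Ioi he] at h
  rw [h, show b - 1 + (k:ℝ) + 1 = b + k by ring]
  ring

set_option maxHeartbeats 1000000 in
lemma coal_taylor_bound (g : ℂ → ℂ) (hg : Differentiable ℂ g) (N : ℕ) :
    ∃ C : ℝ, 0 ≤ C ∧ ∀ u : ℝ, 0 ≤ u → u ≤ 1 →
      |(g u).re - ∑ k ∈ Finset.range N,
          (iteratedDeriv k g 0).re / (Nat.factorial k : ℝ) * u ^ k| ≤ C * u ^ N := by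
  have hT : ∀ z : ℂ, HasSum (fun n : ℕ => (Nat.factorial n : ℂ)⁻¹ • z ^ n • iteratedDeriv n g 0) (g z) := fun z => by
    simpa only [sub_zero] using Complex.hasSum_taylorSeries_of_entire hg 0 z
  have hnorm : ∀ (z : ℂ) (n : ℕ), ‖(Nat.factorial n : ℂ)⁻¹ • z ^ n • iteratedDeriv n g 0‖
      = (Nat.factorial n : ℝ)⁻¹ * (‖z‖ ^ n * ‖iteratedDeriv n g 0‖) := by
    intro z n
    rw [norm_smul, norm_smul, norm_pow]
    simp
  have hβ : Summable (fun n : ℕ => (Nat.factorial n : ℝ)⁻¹ * ‖iteratedDeriv n g 0‖) := by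
    have h1 := (hT 1).summable.norm
    refine h1.congr fun n => ?_
    rw [hnorm]
    simp
  have hβN : Summable (fun n : ℕ => ((Nat.factorial (n+N)) : ℝ)⁻¹ * ‖iteratedDeriv (n + N) g 0‖) :=
    (summable_nat_add_iff N).mpr hβ
  refine ⟨∑' n, ((Nat.factorial (n+N)) : ℝ)⁻¹ * ‖iteratedDeriv (n + N) g 0‖,
    tsum_nonneg fun n => by positivity, fun u hu0 hu1 => ?_⟩
  have h2 : HasSum (fun n => ((Nat.factorial (n+N)) : ℂ)⁻¹ • (u : ℂ) ^ (n + N) • iteratedDeriv (n + N) g 0)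
      (g u - ∑ i ∈ Finset.range N, (Nat.factorial i : ℂ)⁻¹ • (u : ℂ) ^ i • iteratedDeriv i g 0) :=
    (hasSum_nat_add_iff' N).mpr (hT u)
  have hball : ‖g u - ∑ i ∈ Finset.range N, (Nat.factorial i : ℂ)⁻¹ • (u : ℂ) ^ i • iteratedDeriv i g 0‖
      ≤ (∑' n, ((Nat.factorial (n+N)) : ℝ)⁻¹ * ‖iteratedDeriv (n + N) g 0‖) * u ^ N := by
    rw [← h2.tsum_eq, mul_comm]
    refine tsum_of_norm_bounded (hβN.hasSum.mul_left (u ^ N)) fun n => ?_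
    rw [hnorm]
    have hz : ‖(u : ℂ)‖ = u := by
      rw [Complex.norm_real, Real.norm_eq_abs, abs_of_nonneg hu0]
    rw [hz, pow_add]
    have h3 : u ^ n ≤ 1 := pow_le_one₀ hu0 hu1
    have h4 : (0:ℝ) ≤ ‖iteratedDeriv (n + N) g 0‖ := norm_nonneg _
    have h5 : (0:ℝ) ≤ ((Nat.factorial (n+N)) : ℝ)⁻¹ := by positivity
    have h6 : u ^ n * u ^ N ≤ u ^ N := by
      nlinarith [pow_nonneg hu0 N, pow_nonneg hu0 n]
    calc ((Nat.factorial (n+N)) : ℝ)⁻¹ * (u ^ n * u ^ N * ‖iteratedDeriv (n + N) g 0‖)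
        ≤ ((Nat.factorial (n+N)) : ℝ)⁻¹ * (u ^ N * ‖iteratedDeriv (n + N) g 0‖) := by
          apply mul_le_mul_of_nonneg_left _ h5
          exact mul_le_mul_of_nonneg_right h6 h4
      _ = u ^ N * (((Nat.factorial (n+N)) : ℝ)⁻¹ * ‖iteratedDeriv (n + N) g 0‖) := by ring
  have hre : (g u).re - ∑ k ∈ Finset.range N,
      (iteratedDeriv k g 0).re / (Nat.factorial k : ℝ) * u ^ k
      = (g u - ∑ i ∈ Finset.range N, (Nat.factorial i : ℂ)⁻¹ • (u : ℂ) ^ i • iteratedDeriv i g 0).re := by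
    rw [Complex.sub_re, Complex.re_sum]
    congr 1
    refine Finset.sum_congr rfl fun k _ => ?_
    rw [smul_eq_mul, smul_eq_mul, show ((Nat.factorial k : ℂ))⁻¹ * ((u : ℂ) ^ k * iteratedDeriv k g 0)
      = (((Nat.factorial k : ℝ)⁻¹ * u ^ k : ℝ) : ℂ) * iteratedDeriv k g 0 by push_cast; ring, Complex.re_ofReal_mul]
    rw [div_eq_mul_inv]
    ring
  rw [hre]
  exact le_trans (Complex.abs_re_le_norm _) hball

set_option maxHeartbeats 2000000 in
/-- Expansion at coalescence (equation (4.3), Watson's-lemma type): for `b > 0` and `g` entire,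
real-valued on `[0,∞)` with `|g(u)| ≤ M e^{u²/4}` there, for every `N ≥ 1`, as `λ → +∞`,
`∫₀^∞ u^{b-1} g(u) e^{-λu²/2} du
  = (1/2) Σ_{k=0}^{N-1} (g^{(k)}(0)/k!) Γ((b+k)/2) (λ/2)^{-(b+k)/2} + O(λ^{-(b+N)/2})`. -/
theorem coalescence_expansion (b M : ℝ) (hb : 0 < b) (hM : 0 < M)
    (g : ℂ → ℂ) (hg : Differentiable ℂ g)
    (hreal : ∀ u : ℝ, 0 ≤ u → (g u).im = 0)
    (hbd : ∀ u : ℝ, 0 ≤ u → ‖g u‖ ≤ M * Real.exp (u ^ 2 / 4)) :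
    ∀ N : ℕ, 1 ≤ N →
      (fun lam : ℝ =>
        (∫ u in Ioi (0 : ℝ), u ^ (b - 1) * (g u).re * Real.exp (-lam * u ^ 2 / 2))
          - (1 / 2) * ∑ k ∈ Finset.range N,
              ((iteratedDeriv k g 0).re / (Nat.factorial k : ℝ)) *
                Real.Gamma ((b + k) / 2) * (lam / 2) ^ (-(b + (k : ℝ)) / 2))
        =O[atTop] fun lam : ℝ => lam ^ (-(b + (N : ℝ)) / 2) := by
  intro N hN
  obtain ⟨C, hC0, hrem⟩ := coal_taylor_bound g hg N
  set a : ℕ → ℝ := fun k => (iteratedDeriv k g 0).re / (Nat.factorial k : ℝ) with ha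
  set P : ℝ → ℝ := fun u => ∑ k ∈ Finset.range N, a k * u ^ k with hP
  set D : ℝ := ∑ k ∈ Finset.range N, |a k| with hD
  have hD0 : 0 ≤ D := Finset.sum_nonneg fun k _ => abs_nonneg _
  -- global remainder bound
  have hglob : ∀ u : ℝ, 0 ≤ u →
      |(g u).re - P u| ≤ (C + D) * u ^ N + M * (u ^ N * Real.exp (u ^ 2 / 4)) := by
    intro u hu0
    rcases le_or_gt u 1 with hu1 | hu1
    · have h1 := hrem u hu0 hu1
      have h2 : (0:ℝ) ≤ u ^ N := pow_nonneg hu0 N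
      have h3 : (0:ℝ) ≤ Real.exp (u ^ 2 / 4) := (Real.exp_pos _).le
      calc |(g u).re - P u| ≤ C * u ^ N := h1
        _ ≤ (C + D) * u ^ N + M * (u ^ N * Real.exp (u ^ 2 / 4)) := by
            nlinarith [mul_nonneg hD0 h2, mul_nonneg hM.le (mul_nonneg h2 h3)]
    · have hu1' : (1:ℝ) ≤ u := hu1.le
      have hgu : |(g u).re| ≤ M * Real.exp (u ^ 2 / 4) :=
        le_trans (Complex.abs_re_le_norm _) (hbd u hu0)
      have hPu : |P u| ≤ D * u ^ N := by
        rw [hP, hD]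
        calc |∑ k ∈ Finset.range N, a k * u ^ k|
            ≤ ∑ k ∈ Finset.range N, |a k * u ^ k| := Finset.abs_sum_le_sum_abs _ _
          _ ≤ ∑ k ∈ Finset.range N, |a k| * u ^ N := by
              refine Finset.sum_le_sum fun k hk => ?_
              rw [abs_mul, abs_of_nonneg (pow_nonneg hu0 k)]
              exact mul_le_mul_of_nonneg_left
                (pow_le_pow_right₀ hu1' (Finset.mem_range.mp hk).le) (abs_nonneg _)
          _ = (∑ k ∈ Finset.range N, |a k|) * u ^ N := by rw [Finset.sum_mul]
      have huN : (1:ℝ) ≤ u ^ N := one_le_pow₀ hu1'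
      calc |(g u).re - P u| ≤ |(g u).re| + |P u| := abs_sub _ _
        _ ≤ M * Real.exp (u ^ 2 / 4) + D * u ^ N := add_le_add hgu hPu
        _ ≤ (C + D) * u ^ N + M * (u ^ N * Real.exp (u ^ 2 / 4)) := by
            have h3 : (0:ℝ) < Real.exp (u ^ 2 / 4) := Real.exp_pos _
            nlinarith [mul_nonneg hC0 (pow_nonneg hu0 N),
              mul_nonneg (mul_nonneg hM.le h3.le) (sub_nonneg.mpr huN)]
  rw [isBigO_iff]
  refine ⟨((C + D) * (2:ℝ) ^ ((b + (N:ℝ)) / 2) + M * (4:ℝ) ^ ((b + (N:ℝ)) / 2)) *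
    ((1/2) * Real.Gamma ((b + N) / 2)), ?_⟩
  filter_upwards [eventually_ge_atTop (2:ℝ)] with lam hlam2
  have hlam0 : (0:ℝ) < lam := by linarith
  have hlamh : (0:ℝ) < lam / 2 := by linarith
  have intk : ∀ k : ℕ,
      IntegrableOn (fun u : ℝ => u ^ (b-1) * u ^ k * Real.exp (-lam * u ^ 2 / 2)) (Ioi 0) :=
    fun k => coal_int (b-1) (by linarith) k hlam0
  have intN2 : IntegrableOn
      (fun u : ℝ => u ^ (b-1) * u ^ N * Real.exp (-(lam/2) * u ^ 2 / 2)) (Ioi 0) :=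
    coal_int (b-1) (by linarith) N hlamh
  -- key exponential inequality
  have hexp : ∀ u : ℝ, Real.exp (u ^ 2 / 4) * Real.exp (-lam * u ^ 2 / 2)
      ≤ Real.exp (-(lam/2) * u ^ 2 / 2) := by
    intro u
    rw [← Real.exp_add]
    exact Real.exp_le_exp.mpr (by nlinarith [sq_nonneg u])
  -- integrability of the main integrand
  have mcont : ContinuousOn (fun u : ℝ => u ^ (b-1) * (g u).re * Real.exp (-lam * u ^ 2 / 2))
      (Ioi 0) := by
    refine ContinuousOn.mul (ContinuousOn.mul ?_ ?_) ?_
    · exact fun x hx => (Real.continuousAt_rpow_const x (b-1)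
        (Or.inl (ne_of_gt hx))).continuousWithinAt
    · exact (Complex.continuous_re.comp (hg.continuous.comp Complex.continuous_ofReal)).continuousOn
    · exact (Real.continuous_exp.comp (by continuity)).continuousOn
  have intG : IntegrableOn (fun u : ℝ => u ^ (b-1) * (g u).re * Real.exp (-lam * u ^ 2 / 2))
      (Ioi 0) := by
    refine Integrable.mono' ((coal_int (b-1) (by linarith) 0 hlamh).const_mul M)
      (mcont.aestronglyMeasurable measurableSet_Ioi) ?_
    filter_upwards [ae_restrict_mem measurableSet_Ioi] with u hu
    have hu0 : (0:ℝ) < u := hu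
    have h1 : |(g u).re| ≤ M * Real.exp (u ^ 2 / 4) :=
      le_trans (Complex.abs_re_le_norm _) (hbd u hu0.le)
    have h2 : (0:ℝ) ≤ u ^ (b-1) := Real.rpow_nonneg hu0.le _
    calc ‖u ^ (b-1) * (g u).re * Real.exp (-lam * u ^ 2 / 2)‖
        = u ^ (b-1) * |(g u).re| * Real.exp (-lam * u ^ 2 / 2) := by
          rw [Real.norm_eq_abs, abs_mul, abs_mul, abs_of_nonneg h2,
            abs_of_nonneg (Real.exp_pos _).le]
      _ ≤ u ^ (b-1) * (M * Real.exp (u ^ 2 / 4)) * Real.exp (-lam * u ^ 2 / 2) := by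
          exact mul_le_mul_of_nonneg_right (mul_le_mul_of_nonneg_left h1 h2)
            (Real.exp_pos _).le
      _ = M * (u ^ (b-1) * (Real.exp (u ^ 2 / 4) * Real.exp (-lam * u ^ 2 / 2))) := by ring
      _ ≤ M * (u ^ (b-1) * Real.exp (-(lam/2) * u ^ 2 / 2)) := by
          exact mul_le_mul_of_nonneg_left
            (mul_le_mul_of_nonneg_left (hexp u) h2) hM.le
      _ = M * (u ^ (b-1) * u ^ 0 * Real.exp (-(lam/2) * u ^ 2 / 2)) := by
          rw [pow_zero, mul_one]
  -- the sum equals an integral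
  have hS : (1/2) * ∑ k ∈ Finset.range N,
        a k * Real.Gamma ((b + k) / 2) * (lam / 2) ^ (-(b + (k:ℝ)) / 2)
      = ∫ u in Ioi (0:ℝ), (∑ k ∈ Finset.range N,
          a k * (u ^ (b-1) * u ^ k * Real.exp (-lam * u ^ 2 / 2))) := by
    rw [MeasureTheory.integral_finset_sum _ (fun k _ => ((intk k).const_mul (a k))),
      Finset.mul_sum]
    refine Finset.sum_congr rfl fun k _ => ?_
    rw [integral_const_mul, coal_moment b hb k hlam0]
    ring
  have intSum : IntegrableOn (fun u : ℝ => ∑ k ∈ Finset.range N,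
      a k * (u ^ (b-1) * u ^ k * Real.exp (-lam * u ^ 2 / 2))) (Ioi 0) :=
    MeasureTheory.integrable_finset_sum _ (fun k _ => ((intk k).const_mul (a k)))
  have hsplit : (∫ u in Ioi (0:ℝ), u ^ (b-1) * (g u).re * Real.exp (-lam * u ^ 2 / 2))
        - (1/2) * ∑ k ∈ Finset.range N,
            a k * Real.Gamma ((b + k) / 2) * (lam / 2) ^ (-(b + (k:ℝ)) / 2)
      = ∫ u in Ioi (0:ℝ), u ^ (b-1) * ((g u).re - P u) * Real.exp (-lam * u ^ 2 / 2) := by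
    rw [hS, ← MeasureTheory.integral_sub intG intSum]
    refine setIntegral_congr_fun measurableSet_Ioi fun u hu => ?_
    have hsum : ∑ k ∈ Finset.range N, a k * (u ^ (b-1) * u ^ k * Real.exp (-lam * u ^ 2 / 2))
        = u ^ (b-1) * P u * Real.exp (-lam * u ^ 2 / 2) := by
      simp only [hP]
      rw [Finset.mul_sum, Finset.sum_mul]
      exact Finset.sum_congr rfl fun k _ => by ring
    calc u ^ (b-1) * (g u).re * Real.exp (-lam * u ^ 2 / 2)
        - ∑ k ∈ Finset.range N, a k * (u ^ (b-1) * u ^ k * Real.exp (-lam * u ^ 2 / 2))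
        = u ^ (b-1) * (g u).re * Real.exp (-lam * u ^ 2 / 2)
          - u ^ (b-1) * P u * Real.exp (-lam * u ^ 2 / 2) := by rw [hsum]
      _ = u ^ (b-1) * ((g u).re - P u) * Real.exp (-lam * u ^ 2 / 2) := by ring
  rw [hsplit]
  -- bound the remainder integral
  have hbound : ‖∫ u in Ioi (0:ℝ), u ^ (b-1) * ((g u).re - P u) * Real.exp (-lam * u ^ 2 / 2)‖
      ≤ ∫ u in Ioi (0:ℝ), ((C + D) * (u ^ (b-1) * u ^ N * Real.exp (-lam * u ^ 2 / 2))
          + M * (u ^ (b-1) * u ^ N * Real.exp (-(lam/2) * u ^ 2 / 2))) := by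
    refine MeasureTheory.norm_integral_le_of_norm_le
      (((intk N).const_mul (C + D)).add (intN2.const_mul M)) ?_
    filter_upwards [ae_restrict_mem measurableSet_Ioi] with u hu
    have hu0 : (0:ℝ) < u := hu
    have h2 : (0:ℝ) ≤ u ^ (b-1) := Real.rpow_nonneg hu0.le _
    calc ‖u ^ (b-1) * ((g u).re - P u) * Real.exp (-lam * u ^ 2 / 2)‖
        = u ^ (b-1) * |(g u).re - P u| * Real.exp (-lam * u ^ 2 / 2) := by
          rw [Real.norm_eq_abs, abs_mul, abs_mul, abs_of_nonneg h2,
            abs_of_nonneg (Real.exp_pos _).le]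
      _ ≤ u ^ (b-1) * ((C + D) * u ^ N + M * (u ^ N * Real.exp (u ^ 2 / 4)))
            * Real.exp (-lam * u ^ 2 / 2) := by
          exact mul_le_mul_of_nonneg_right
            (mul_le_mul_of_nonneg_left (hglob u hu0.le) h2) (Real.exp_pos _).le
      _ = (C + D) * (u ^ (b-1) * u ^ N * Real.exp (-lam * u ^ 2 / 2))
            + M * (u ^ (b-1) * u ^ N *
              (Real.exp (u ^ 2 / 4) * Real.exp (-lam * u ^ 2 / 2))) := by ring
      _ ≤ (C + D) * (u ^ (b-1) * u ^ N * Real.exp (-lam * u ^ 2 / 2))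
            + M * (u ^ (b-1) * u ^ N * Real.exp (-(lam/2) * u ^ 2 / 2)) := by
          refine add_le_add le_rfl (mul_le_mul_of_nonneg_left
            (mul_le_mul_of_nonneg_left (hexp u) ?_) hM.le)
          exact mul_nonneg h2 (pow_nonneg hu0.le N)
  have hval : (∫ u in Ioi (0:ℝ), ((C + D) * (u ^ (b-1) * u ^ N * Real.exp (-lam * u ^ 2 / 2))
          + M * (u ^ (b-1) * u ^ N * Real.exp (-(lam/2) * u ^ 2 / 2))))
      = (C + D) * ((1/2) * Real.Gamma ((b + N) / 2) * (lam/2) ^ (-(b + (N:ℝ)) / 2))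
        + M * ((1/2) * Real.Gamma ((b + N) / 2) * (lam/4) ^ (-(b + (N:ℝ)) / 2)) := by
    rw [MeasureTheory.integral_add ((intk N).const_mul (C + D)) (intN2.const_mul M),
      integral_const_mul, integral_const_mul,
      coal_moment b hb N hlam0, coal_moment b hb N hlamh,
      show lam / 2 / 2 = lam / 4 by ring]
  -- convert the powers of lam/2 and lam/4
  have hpow2 : (lam/2) ^ (-(b + (N:ℝ)) / 2)
      = lam ^ (-(b + (N:ℝ)) / 2) * (2:ℝ) ^ ((b + (N:ℝ)) / 2) := by
    rw [Real.div_rpow hlam0.le (by norm_num : (0:ℝ) ≤ 2), div_eq_mul_inv, ← Real.rpow_neg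
      (by norm_num : (0:ℝ) ≤ 2), show -(-(b + (N:ℝ)) / 2) = (b + (N:ℝ)) / 2 by ring]
  have hpow4 : (lam/4) ^ (-(b + (N:ℝ)) / 2)
      = lam ^ (-(b + (N:ℝ)) / 2) * (4:ℝ) ^ ((b + (N:ℝ)) / 2) := by
    rw [Real.div_rpow hlam0.le (by norm_num : (0:ℝ) ≤ 4), div_eq_mul_inv, ← Real.rpow_neg
      (by norm_num : (0:ℝ) ≤ 4), show -(-(b + (N:ℝ)) / 2) = (b + (N:ℝ)) / 2 by ring]
  have hnorm : ‖lam ^ (-(b + (N:ℝ)) / 2)‖ = lam ^ (-(b + (N:ℝ)) / 2) := by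
    rw [Real.norm_eq_abs, abs_of_nonneg (Real.rpow_nonneg hlam0.le _)]
  rw [hnorm]
  calc ‖∫ u in Ioi (0:ℝ), u ^ (b-1) * ((g u).re - P u) * Real.exp (-lam * u ^ 2 / 2)‖
      ≤ (C + D) * ((1/2) * Real.Gamma ((b + N) / 2) * (lam/2) ^ (-(b + (N:ℝ)) / 2))
        + M * ((1/2) * Real.Gamma ((b + N) / 2) * (lam/4) ^ (-(b + (N:ℝ)) / 2)) := by
        rw [← hval]; exact hbound
    _ = ((C + D) * (2:ℝ) ^ ((b + (N:ℝ)) / 2) + M * (4:ℝ) ^ ((b + (N:ℝ)) / 2)) *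
        ((1/2) * Real.Gamma ((b + N) / 2)) * lam ^ (-(b + (N:ℝ)) / 2) := by
        rw [hpow2, hpow4]; ring
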